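/- Given a network G with duplication forest Γ, the complementarity number δ(θ) = Σ_i δ(v_i) is the same for every duplicate sequence θ compatible with Γ, where δ(v_i) indicates whether duplicate v_i is adjacent to its anchor u_i in G_i^θ. -/

import Mathlib

open scoped Classical

universe u

variable {V : Type u}

/-- The merge (backward) operator `R_v^u(G)`: contract duplicate `v` into anchor `u`.
Vertex `v` becomes isolated (representing its removal from the vertex set). -/
def mergeG (G : SimpleGraph V) (u v : V) : SimpleGraph V where
  Adj x y := x ≠ y ∧ x ≠ v ∧ y ≠ v ∧
    (G.Adj x y ∨ (x = u ∧ G.Adj v y) ∨ (y = u ∧ G.Adj v x))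
  symm := by
    refine ⟨?_⟩
    rintro x y ⟨h1, h2, h3, h4⟩
    refine ⟨h1.symm, h3, h2, ?_⟩
    rcases h4 with h | ⟨a, b⟩ | ⟨a, b⟩
    · exact Or.inl h.symm
    · exact Or.inr (Or.inr ⟨a, b⟩)
    · exact Or.inr (Or.inl ⟨a, b⟩)
  loopless := by refine ⟨?_⟩; rintro x ⟨h, _⟩; exact h rfl

/-- δ(v): 1 if the duplicate `v` is adjacent to its anchor `u`. -/
noncomputable def deltaI (G : SimpleGraph V) (u v : V) : ℕ :=
  if G.Adj u v then 1 else 0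

/-- e(v): number of common neighbours of anchor `u` and duplicate `v`. -/
noncomputable def extI [Fintype V] (G : SimpleGraph V) (u v : V) : ℕ :=
  (G.neighborFinset u ∩ G.neighborFinset v).card

/-- ℓ(v): number of vertices (other than `u`, `v`) adjacent to exactly one of `u`, `v`. -/
noncomputable def lossI [Fintype V] (G : SimpleGraph V) (u v : V) : ℕ :=
  (((G.neighborFinset u ∪ G.neighborFinset v) \
      (G.neighborFinset u ∩ G.neighborFinset v)) \ {u, v}).card

/-- Apply the merge operators backward along a list of (anchor, duplicate) pairs. -/
noncomputable def graphAfter (G : SimpleGraph V) (steps : List (V × V)) : SimpleGraph V :=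
  steps.foldl (fun g p => mergeG g p.1 p.2) G

noncomputable def deltaNum : SimpleGraph V → List (V × V) → ℕ
  | _, [] => 0
  | G, s :: rest => deltaI G s.1 s.2 + deltaNum (mergeG G s.1 s.2) rest

noncomputable def extNum [Fintype V] : SimpleGraph V → List (V × V) → ℕ
  | _, [] => 0
  | G, s :: rest => extI G s.1 s.2 + extNum (mergeG G s.1 s.2) rest

noncomputable def lossNum [Fintype V] : SimpleGraph V → List (V × V) → ℕ
  | _, [] => 0
  | G, s :: rest => lossI G s.1 s.2 + lossNum (mergeG G s.1 s.2) rest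

/-- The likelihood of a (backward) history: product of one-step DMC transition
probabilities `p_c^{δ_i} p^{e_i} q^{ℓ_i}` with `q = (1-p)/2`. -/
noncomputable def likelihood [Fintype V] (pc p : ℝ) : SimpleGraph V → List (V × V) → ℝ
  | _, [] => 1
  | G, s :: rest =>
      pc ^ deltaI G s.1 s.2 * p ^ extI G s.1 s.2 * ((1 - p) / 2) ^ lossI G s.1 s.2 *
        likelihood pc p (mergeG G s.1 s.2) rest

/-- Rooted binary trees. -/
inductive BTree (V : Type u) : Type u
  | leaf : V → BTree V
  | node : BTree V → BTree V → BTree V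

def BTree.leaves : BTree V → List V
  | .leaf v => [v]
  | .node l r => l.leaves ++ r.leaves

/-- A duplication forest: a list of rooted binary trees. -/
abbrev Forest (V : Type u) := List (BTree V)

def Forest.leaves (Γ : Forest V) : List V := Γ.flatMap BTree.leaves

/-- Replace the cherry `{u, v}` of a tree by the single leaf `u`. -/
inductive ReplaceCherry : BTree V → V → V → BTree V → Prop
  | base_left (u v : V) : ReplaceCherry (.node (.leaf u) (.leaf v)) u v (.leaf u)
  | base_right (u v : V) : ReplaceCherry (.node (.leaf v) (.leaf u)) u v (.leaf u)
  | left {l l' r : BTree V} {u v : V} :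
      ReplaceCherry l u v l' → ReplaceCherry (.node l r) u v (.node l' r)
  | right {l r r' : BTree V} {u v : V} :
      ReplaceCherry r u v r' → ReplaceCherry (.node l r) u v (.node l r')

/-- One backward step on a duplication forest: replace the cherry `{u,v}` in one tree. -/
inductive ForestStep : Forest V → V → V → Forest V → Prop
  | head {t t' : BTree V} {ts : Forest V} {u v : V} :
      ReplaceCherry t u v t' → ForestStep (t :: ts) u v (t' :: ts)
  | tail {t : BTree V} {ts ts' : Forest V} {u v : V} :
      ForestStep ts u v ts' → ForestStep (t :: ts) u v (t :: ts')

/-- `FUnfold Γ steps Γ₀`: the (anchor, duplicate) list `steps`, processed backward in time,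
is compatible with the duplication forest `Γ` and reduces it to `Γ₀`. -/
inductive FUnfold : Forest V → List (V × V) → Forest V → Prop
  | nil (Γ : Forest V) : FUnfold Γ [] Γ
  | cons {Γ Γ' Γ₀ : Forest V} {u v : V} {steps : List (V × V)} :
      ForestStep Γ u v Γ' → FUnfold Γ' steps Γ₀ → FUnfold Γ ((u, v) :: steps) Γ₀

/-- A forest consisting only of isolated leaves (duplication forest of a seed graph). -/
def IsSeed (Γ : Forest V) : Prop := ∀ t ∈ Γ, ∃ v, t = BTree.leaf v

section Stmt6Aux

/-- indicator: is there an edge between `A` and `B`? -/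
noncomputable def cInd (H : SimpleGraph V) (A B : List V) : ℕ :=
  if ∃ a ∈ A, ∃ b ∈ B, H.Adj a b then 1 else 0

/-- For each internal node of the tree, count 1 if there is a cross edge in `H`
between the leaf sets of its two children. -/
noncomputable def treeD (H : SimpleGraph V) : BTree V → ℕ
  | .leaf _ => 0
  | .node l r => cInd H l.leaves r.leaves + treeD H l + treeD H r

noncomputable def forestD (H : SimpleGraph V) (Γ : Forest V) : ℕ :=
  (Γ.map (treeD H)).sum

lemma cInd_symm (H : SimpleGraph V) (A B : List V) : cInd H A B = cInd H B A := by
  unfold cInd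
  congr 1
  simp only [eq_iff_iff]
  constructor <;> rintro ⟨a, ha, b, hb, h⟩ <;> exact ⟨b, hb, a, ha, h.symm⟩

lemma cInd_congr {H H' : SimpleGraph V} {A B : List V}
    (h : ∀ x ∈ A, ∀ y ∈ B, (H.Adj x y ↔ H'.Adj x y)) : cInd H A B = cInd H' A B := by
  unfold cInd
  congr 1
  simp only [eq_iff_iff]
  constructor <;> rintro ⟨a, ha, b, hb, hab⟩
  · exact ⟨a, ha, b, hb, (h a ha b hb).1 hab⟩
  · exact ⟨a, ha, b, hb, (h a ha b hb).2 hab⟩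

lemma adj_mergeG {H : SimpleGraph V} {u v x y : V}
    (hxu : x ≠ u) (hxv : x ≠ v) (hyu : y ≠ u) (hyv : y ≠ v) :
    (mergeG H u v).Adj x y ↔ H.Adj x y := by
  constructor
  · rintro ⟨h1, h2, h3, h | ⟨a, b⟩ | ⟨a, b⟩⟩
    · exact h
    · exact absurd a hxu
    · exact absurd a hyu
  · intro h
    exact ⟨H.ne_of_adj h, hxv, hyv, Or.inl h⟩

lemma treeD_congr {H H' : SimpleGraph V} {t : BTree V}
    (h : ∀ x ∈ t.leaves, ∀ y ∈ t.leaves, (H.Adj x y ↔ H'.Adj x y)) : treeD H t = treeD H' t := by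
  induction t with
  | leaf v => rfl
  | node l r ihl ihr =>
    simp only [treeD]
    have hl : ∀ x ∈ l.leaves, ∀ y ∈ l.leaves, (H.Adj x y ↔ H'.Adj x y) := fun x hx y hy =>
      h x (by simp [BTree.leaves, hx]) y (by simp [BTree.leaves, hy])
    have hr : ∀ x ∈ r.leaves, ∀ y ∈ r.leaves, (H.Adj x y ↔ H'.Adj x y) := fun x hx y hy =>
      h x (by simp [BTree.leaves, hx]) y (by simp [BTree.leaves, hy])
    rw [ihl hl, ihr hr, cInd_congr (fun x hx y hy =>
      h x (by simp [BTree.leaves, hx]) y (by simp [BTree.leaves, hy]))]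

lemma treeD_merge_congr {H : SimpleGraph V} {u v : V} {t : BTree V}
    (h : ∀ x ∈ t.leaves, x ≠ u ∧ x ≠ v) : treeD H t = treeD (mergeG H u v) t :=
  treeD_congr fun x hx y hy =>
    (adj_mergeG (h x hx).1 (h x hx).2 (h y hy).1 (h y hy).2).symm

/-- merging a cherry inside `A` doesn't change cross adjacency with disjoint `B`. -/
lemma cInd_merge_left {H : SimpleGraph V} {u v : V} {A B : List V}
    (hA : A.Nodup) (hu : u ∈ A) (hv : v ∈ A) (huv : u ≠ v)
    (hB : ∀ b ∈ B, b ≠ u ∧ b ≠ v) :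
    cInd H A B = cInd (mergeG H u v) (A.erase v) B := by
  unfold cInd
  congr 1
  simp only [eq_iff_iff]
  constructor
  · rintro ⟨a, ha, b, hb, hab⟩
    have hbu := (hB b hb).1
    have hbv := (hB b hb).2
    by_cases hav : a = v
    · subst hav
      refine ⟨u, (hA.mem_erase_iff).2 ⟨huv, hu⟩, b, hb, ?_⟩
      exact ⟨fun h => hbu h.symm, huv, hbv, Or.inr (Or.inl ⟨rfl, hab⟩)⟩
    · refine ⟨a, (hA.mem_erase_iff).2 ⟨hav, ha⟩, b, hb, ?_⟩
      exact ⟨H.ne_of_adj hab, hav, hbv, Or.inl hab⟩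
  · rintro ⟨a, ha, b, hb, hab⟩
    have ha' := ((hA.mem_erase_iff).1 ha).2
    rcases hab with ⟨h1, h2, h3, h | ⟨rfl, hvb⟩ | ⟨rfl, hva⟩⟩
    · exact ⟨a, ha', b, hb, h⟩
    · exact ⟨v, hv, b, hb, hvb⟩
    · exact absurd rfl (hB b hb).1

lemma cInd_merge_right {H : SimpleGraph V} {u v : V} {A B : List V}
    (hB : B.Nodup) (hu : u ∈ B) (hv : v ∈ B) (huv : u ≠ v)
    (hA : ∀ a ∈ A, a ≠ u ∧ a ≠ v) :
    cInd H A B = cInd (mergeG H u v) A (B.erase v) := by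
  rw [cInd_symm, cInd_merge_left hB hu hv huv hA, cInd_symm]

lemma rc_mem {t t' : BTree V} {u v : V} (h : ReplaceCherry t u v t') :
    u ∈ t.leaves ∧ v ∈ t.leaves := by
  induction h with
  | base_left u v => simp [BTree.leaves]
  | base_right u v => simp [BTree.leaves]
  | left h ih => simp [BTree.leaves, ih.1, ih.2]
  | right h ih => simp [BTree.leaves, ih.1, ih.2]

lemma rc_ne {t t' : BTree V} {u v : V} (hnd : t.leaves.Nodup)
    (h : ReplaceCherry t u v t') : u ≠ v := by
  induction h with
  | base_left u v => simp [BTree.leaves, List.nodup_cons] at hnd; exact hnd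
  | base_right u v =>
    simp [BTree.leaves, List.nodup_cons] at hnd; exact fun h => hnd h.symm
  | left h ih =>
    exact ih ((List.nodup_append.1 hnd).1)
  | right h ih =>
    exact ih ((List.nodup_append.1 hnd).2.1)

lemma rc_leaves {t t' : BTree V} {u v : V} (hnd : t.leaves.Nodup)
    (h : ReplaceCherry t u v t') : t'.leaves = t.leaves.erase v := by
  induction h with
  | base_left u v =>
    have : u ≠ v := rc_ne hnd (.base_left u v)
    simp [BTree.leaves, List.erase_cons, this]
  | base_right u v => simp [BTree.leaves, List.erase_cons]
  | @left l l' r u v h ih =>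
    have hnl : l.leaves.Nodup := (List.nodup_append.1 hnd).1
    have hvl : v ∈ l.leaves := (rc_mem h).2
    simp only [BTree.leaves, ih hnl, List.erase_append_left _ hvl]
  | @right l r r' u v h ih =>
    have hnr : r.leaves.Nodup := (List.nodup_append.1 hnd).2.1
    have hvr : v ∈ r.leaves := (rc_mem h).2
    have hvl : v ∉ l.leaves := fun hc => (List.nodup_append.1 hnd).2.2 v hc v hvr rfl
    simp only [BTree.leaves, ih hnr, List.erase_append_right _ hvl]

lemma treeD_step {H : SimpleGraph V} {t t' : BTree V} {u v : V}
    (hnd : t.leaves.Nodup) (h : ReplaceCherry t u v t') :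
    treeD H t = deltaI H u v + treeD (mergeG H u v) t' := by
  induction h generalizing H with
  | base_left u v =>
    simp [treeD, BTree.leaves, cInd, deltaI]
  | base_right u v =>
    simp [treeD, BTree.leaves, cInd, deltaI, SimpleGraph.adj_comm]
  | @left l l' r u v h ih =>
    obtain ⟨hnl, hnr, hdisj⟩ := List.nodup_append.1 hnd
    have hu : u ∈ l.leaves := (rc_mem h).1
    have hv : v ∈ l.leaves := (rc_mem h).2
    have huv : u ≠ v := rc_ne hnl h
    have hB : ∀ b ∈ r.leaves, b ≠ u ∧ b ≠ v :=
      fun b hb => ⟨fun e => hdisj u hu b hb e.symm, fun e => hdisj v hv b hb e.symm⟩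
    simp only [treeD, BTree.leaves]
    rw [ih hnl, treeD_merge_congr hB,
      cInd_merge_left hnl hu hv huv hB, ← rc_leaves hnl h]
    omega
  | @right l r r' u v h ih =>
    obtain ⟨hnl, hnr, hdisj⟩ := List.nodup_append.1 hnd
    have hu : u ∈ r.leaves := (rc_mem h).1
    have hv : v ∈ r.leaves := (rc_mem h).2
    have huv : u ≠ v := rc_ne hnr h
    have hA : ∀ a ∈ l.leaves, a ≠ u ∧ a ≠ v :=
      fun a ha => ⟨fun e => hdisj a ha u hu e, fun e => hdisj a ha v hv e⟩
    simp only [treeD, BTree.leaves]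
    rw [ih hnr, treeD_merge_congr hA,
      cInd_merge_right hnr hu hv huv hA, ← rc_leaves hnr h]
    omega

lemma fs_mem {Γ Γ' : Forest V} {u v : V} (h : ForestStep Γ u v Γ') :
    u ∈ Forest.leaves Γ ∧ v ∈ Forest.leaves Γ := by
  induction h with
  | @head t t' ts u v hrc =>
    simp [Forest.leaves, (rc_mem hrc).1, (rc_mem hrc).2]
  | @tail t ts ts' u v hstep ih =>
    simp [Forest.leaves, List.flatMap_cons] at ih ⊢
    tauto

lemma forestD_step {H : SimpleGraph V} {Γ Γ' : Forest V} {u v : V}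
    (hnd : (Forest.leaves Γ).Nodup) (h : ForestStep Γ u v Γ') :
    forestD H Γ = deltaI H u v + forestD (mergeG H u v) Γ' := by
  induction h generalizing H with
  | @head t t' ts u v hrc =>
    have hnd' : (t.leaves ++ Forest.leaves ts).Nodup := by
      simpa [Forest.leaves, List.flatMap_cons] using hnd
    obtain ⟨hnt, hnts, hdisj⟩ := List.nodup_append.1 hnd'
    have hu : u ∈ t.leaves := (rc_mem hrc).1
    have hv : v ∈ t.leaves := (rc_mem hrc).2
    have hrest : ∀ s ∈ ts, treeD H s = treeD (mergeG H u v) s := by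
      intro s hs
      refine treeD_merge_congr fun x hx => ?_
      have hxts : x ∈ Forest.leaves ts := by
        simp [Forest.leaves, List.mem_flatMap]; exact ⟨s, hs, hx⟩
      exact ⟨fun e => hdisj u hu x hxts e.symm, fun e => hdisj v hv x hxts e.symm⟩
    simp only [forestD, List.map_cons, List.sum_cons]
    rw [treeD_step hnt hrc]
    have : (ts.map (treeD H)).sum = (ts.map (treeD (mergeG H u v))).sum := by
      rw [List.map_congr_left hrest]
    omega
  | @tail t ts ts' u v hstep ih =>
    have hnd' : (t.leaves ++ Forest.leaves ts).Nodup := by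
      simpa [Forest.leaves, List.flatMap_cons] using hnd
    obtain ⟨hnt, hnts, hdisj⟩ := List.nodup_append.1 hnd'
    have hu : u ∈ Forest.leaves ts := (fs_mem hstep).1
    have hv : v ∈ Forest.leaves ts := (fs_mem hstep).2
    have ht : treeD H t = treeD (mergeG H u v) t := by
      refine treeD_merge_congr fun x hx => ?_
      exact ⟨fun e => hdisj x hx u hu e, fun e => hdisj x hx v hv e⟩
    simp only [forestD, List.map_cons, List.sum_cons] at *
    rw [ih hnts, ht]
    omega

lemma fs_leaves {Γ Γ' : Forest V} {u v : V} (hnd : (Forest.leaves Γ).Nodup)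
    (h : ForestStep Γ u v Γ') : Forest.leaves Γ' = (Forest.leaves Γ).erase v := by
  induction h with
  | @head t t' ts u v hrc =>
    have hnd' : (t.leaves ++ Forest.leaves ts).Nodup := by
      simpa [Forest.leaves, List.flatMap_cons] using hnd
    have hnt : t.leaves.Nodup := (List.nodup_append.1 hnd').1
    have hv : v ∈ t.leaves := (rc_mem hrc).2
    simp only [Forest.leaves, List.flatMap_cons, rc_leaves hnt hrc,
      List.erase_append_left _ hv]
  | @tail t ts ts' u v hstep ih =>
    have hnd' : (t.leaves ++ Forest.leaves ts).Nodup := by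
      simpa [Forest.leaves, List.flatMap_cons] using hnd
    obtain ⟨hnt, hnts, hdisj⟩ := List.nodup_append.1 hnd'
    have hv : v ∈ Forest.leaves ts := (fs_mem hstep).2
    have hvt : v ∉ t.leaves := fun hc => hdisj v hc v hv rfl
    simp only [Forest.leaves, List.flatMap_cons] at *
    rw [ih hnts, List.erase_append_right _ hvt]

lemma forestD_seed {H : SimpleGraph V} {Γ : Forest V} (h : IsSeed Γ) : forestD H Γ = 0 := by
  simp only [forestD]
  rw [List.sum_eq_zero]
  intro x hx
  simp only [List.mem_map] at hx
  obtain ⟨t, ht, rfl⟩ := hx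
  obtain ⟨w, rfl⟩ := h t ht
  rfl

lemma deltaNum_eq_forestD {H : SimpleGraph V} {Γ Γ₀ : Forest V} {s : List (V × V)}
    (h : FUnfold Γ s Γ₀) (hnd : (Forest.leaves Γ).Nodup) (hseed : IsSeed Γ₀) :
    deltaNum H s = forestD H Γ := by
  induction h generalizing H with
  | nil Γ => rw [forestD_seed hseed]; rfl
  | @cons Γ Γ' Γ₀ u v steps hstep hrest ih =>
    have hnd' : (Forest.leaves Γ').Nodup := by
      rw [fs_leaves hnd hstep]; exact hnd.erase v
    simp only [deltaNum]
    rw [ih hnd' hseed, forestD_step hnd hstep]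

end Stmt6Aux

/-- the complementarity number `δ(θ)` is the same for every duplicate
sequence compatible with the duplication forest `Γ` of the network `G`. -/
theorem stmt6 [Fintype V] (G : SimpleGraph V) (Γ : Forest V)
    (hnd : (Forest.leaves Γ).Nodup) (hall : ∀ x : V, x ∈ Forest.leaves Γ)
    (s₁ s₂ : List (V × V)) (Γ₁ Γ₂ : Forest V)
    (h₁ : FUnfold Γ s₁ Γ₁) (hseed₁ : IsSeed Γ₁)
    (h₂ : FUnfold Γ s₂ Γ₂) (hseed₂ : IsSeed Γ₂) :
    deltaNum G s₁ = deltaNum G s₂ := by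
  rw [deltaNum_eq_forestD h₁ hnd hseed₁, deltaNum_eq_forestD h₂ hnd hseed₂]
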